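/- Let f ⊆ F be relations on X with F transitive and F = f ∪ F ∘ f (i.e., every (x,y) ∈ F is in f or satisfies: ∃z with (x,z) ∈ f and (z,y) ∈ F). Suppose F₁ is another transitive relation on X with f ⊆ F₁ and F₁ = f ∪ F₁ ∘ f. If 1_X ∪ F = 1_X ∪ F₁, then F = F₁. -/
import Mathlib

lemma rel_sub_aux {X : Type*} (f F F₁ : Set (X × X))
    (hfF₁ : f ⊆ F₁)
    (htrans₁ : ∀ x y z : X, (x, y) ∈ F₁ → (y, z) ∈ F₁ → (x, z) ∈ F₁)
    (hF : F = f ∪ { p : X × X | ∃ z, (p.1, z) ∈ f ∧ (z, p.2) ∈ F })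
    (heq : { p : X × X | p.1 = p.2 } ∪ F = { p : X × X | p.1 = p.2 } ∪ F₁) :
    F ⊆ F₁ := by
  intro ⟨x, y⟩ h
  have key : ∀ a b : X, (a, b) ∈ F → a = b ∨ (a, b) ∈ F₁ := by
    intro a b hab
    have : (a, b) ∈ { p : X × X | p.1 = p.2 } ∪ F₁ := heq ▸ Or.inr hab
    exact this
  rcases key x y h with rfl | h₁
  · rw [hF] at h
    rcases h with h | ⟨z, hz1, hz2⟩
    · exact hfF₁ h
    · rcases key z x hz2 with rfl | h₂
      · exact hfF₁ hz1
      · exact htrans₁ x z x (hfF₁ hz1) h₂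
  · exact h₁

theorem rel_eq_of_diag_union_eq {X : Type*} (f F F₁ : Set (X × X))
    (hfF : f ⊆ F) (hfF₁ : f ⊆ F₁)
    (htrans : ∀ x y z : X, (x, y) ∈ F → (y, z) ∈ F → (x, z) ∈ F)
    (htrans₁ : ∀ x y z : X, (x, y) ∈ F₁ → (y, z) ∈ F₁ → (x, z) ∈ F₁)
    (hF : F = f ∪ { p : X × X | ∃ z, (p.1, z) ∈ f ∧ (z, p.2) ∈ F })
    (hF₁ : F₁ = f ∪ { p : X × X | ∃ z, (p.1, z) ∈ f ∧ (z, p.2) ∈ F₁ })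
    (heq : { p : X × X | p.1 = p.2 } ∪ F = { p : X × X | p.1 = p.2 } ∪ F₁) :
    F = F₁ :=
  Set.Subset.antisymm
    (rel_sub_aux f F F₁ hfF₁ htrans₁ hF heq)
    (rel_sub_aux f F₁ F hfF htrans hF₁ heq.symm)
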